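/- Let A be a finely Λ-graded algebra with involution over a field F such that supp(A) = Λ, every product of nonzero homogeneous elements is nonzero, and each homogeneous component is one-dimensional. Suppose Λ = Λ' ⊕ Λ'' with [A^{Λ'}, A^{Λ''}] = 0 and (A^{Λ'}, A^{Λ''}, A) = (A, A^{Λ'}, A^{Λ''}) = 0. Then the map x ⊗ y ↦ xy is a graded isomorphism of algebras with involution from A^{Λ'} ⊗_F A^{Λ''} onto A. -/

import Mathlib

/-- Let `A` be a finely `Λ`-graded algebra with involution over a field `F`, with support
all of `Λ`, in which products of nonzero homogeneous elements are nonzero.  If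
`Λ = Λ' ⊕ Λ''` with `[A^{Λ'}, A^{Λ''}] = 0` and
`(A^{Λ'}, A^{Λ''}, A) = (A, A^{Λ'}, A^{Λ''}) = 0`, then `x ⊗ y ↦ xy` is a graded
isomorphism of algebras with involution from `A^{Λ'} ⊗_F A^{Λ''}` onto `A`:  it is
bijective, multiplicative (w.r.t. the tensor product multiplication), star-preserving and
graded. -/
theorem stmt_10 (F Λ A : Type*) [Field F] [AddCommGroup Λ] [DecidableEq Λ]
    [NonAssocRing A] [Module F A]
    [SMulCommClass F A A] [IsScalarTower F A A] [StarRing A]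
    (hstarlin : ∀ (c : F) (a : A), star (c • a) = c • star a)
    (𝒜 : Λ → Submodule F A) [DirectSum.Decomposition 𝒜]
    (hone : (1 : A) ∈ 𝒜 0)
    (hmul : ∀ {l m : Λ} {x y : A}, x ∈ 𝒜 l → y ∈ 𝒜 m → x * y ∈ 𝒜 (l + m))
    (hstar : ∀ {l : Λ} {x : A}, x ∈ 𝒜 l → star x ∈ 𝒜 l)
    (hfine : ∀ l, Module.finrank F (𝒜 l) = 1)
    (hnz : ∀ {l m : Λ} {x y : A}, x ∈ 𝒜 l → y ∈ 𝒜 m → x ≠ 0 → y ≠ 0 → x * y ≠ 0)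
    (Λ' Λ'' : AddSubgroup Λ) (hcompl : IsCompl Λ' Λ'')
    (hcomm : ∀ x y : A, x ∈ (⨆ l ∈ Λ', 𝒜 l) → y ∈ (⨆ l ∈ Λ'', 𝒜 l) → x * y = y * x)
    (hassoc1 : ∀ x y z : A, x ∈ (⨆ l ∈ Λ', 𝒜 l) → y ∈ (⨆ l ∈ Λ'', 𝒜 l) →
      (x * y) * z = x * (y * z))
    (hassoc2 : ∀ x y z : A, y ∈ (⨆ l ∈ Λ', 𝒜 l) → z ∈ (⨆ l ∈ Λ'', 𝒜 l) →
      (x * y) * z = x * (y * z)) :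
    Function.Bijective
      (TensorProduct.lift
        (((LinearMap.mul F A).domRestrict (⨆ l ∈ Λ', 𝒜 l)).compl₂
          (⨆ l ∈ Λ'', 𝒜 l).subtype)) ∧
    (∀ x₁ x₂ y₁ y₂ : A, x₁ ∈ (⨆ l ∈ Λ', 𝒜 l) → x₂ ∈ (⨆ l ∈ Λ', 𝒜 l) →
      y₁ ∈ (⨆ l ∈ Λ'', 𝒜 l) → y₂ ∈ (⨆ l ∈ Λ'', 𝒜 l) →
      (x₁ * y₁) * (x₂ * y₂) = (x₁ * x₂) * (y₁ * y₂)) ∧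
    (∀ x y : A, x ∈ (⨆ l ∈ Λ', 𝒜 l) → y ∈ (⨆ l ∈ Λ'', 𝒜 l) →
      star (x * y) = star x * star y) ∧
    (∀ (l m : Λ) (x y : A), l ∈ Λ' → m ∈ Λ'' → x ∈ 𝒜 l → y ∈ 𝒜 m →
      x * y ∈ 𝒜 (l + m)) := by
  classical
  -- basic membership helper
  have hmem : ∀ (M : AddSubgroup Λ) {l : Λ} {x : A}, l ∈ M → x ∈ 𝒜 l →
      x ∈ (⨆ l ∈ M, 𝒜 l) := fun M {l x} hl hx =>
    Submodule.mem_iSup_of_mem l (Submodule.mem_iSup_of_mem hl hx)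
  -- the supremum over a subgroup is closed under `star`
  have hstarM : ∀ (M : AddSubgroup Λ) (x : A), x ∈ (⨆ l ∈ M, 𝒜 l) →
      star x ∈ (⨆ l ∈ M, 𝒜 l) := by
    intro M x hx
    rw [iSup_subtype'] at hx ⊢
    refine Submodule.iSup_induction (motive := fun y => star y ∈ ⨆ i : M, 𝒜 (i : Λ)) _ hx
      (fun i x hxi => Submodule.mem_iSup_of_mem i (hstar hxi)) ?_ ?_
    · simpa using zero_mem (⨆ i : M, 𝒜 (i : Λ))
    · intro a b ha hb; simp only [star_add]; exact add_mem ha hb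
  -- the supremum over a subgroup is closed under multiplication
  have hmulM : ∀ (M : AddSubgroup Λ) (x y : A), x ∈ (⨆ l ∈ M, 𝒜 l) →
      y ∈ (⨆ l ∈ M, 𝒜 l) → x * y ∈ (⨆ l ∈ M, 𝒜 l) := by
    intro M x y hx hy
    rw [iSup_subtype'] at hx hy ⊢
    refine Submodule.iSup_induction (motive := fun x => x * y ∈ ⨆ i : M, 𝒜 (i : Λ)) _ hx ?_ ?_ ?_
    · intro i x hxi
      refine Submodule.iSup_induction (motive := fun y => x * y ∈ ⨆ i : M, 𝒜 (i : Λ)) _ hy ?_ ?_ ?_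
      · intro j y hyj
        exact Submodule.mem_iSup_of_mem ⟨(i : Λ) + j, add_mem i.2 j.2⟩ (hmul hxi hyj)
      · simpa using zero_mem (⨆ i : M, 𝒜 (i : Λ))
      · intro a b ha hb; simp only [mul_add]; exact add_mem ha hb
    · simpa using zero_mem (⨆ i : M, 𝒜 (i : Λ))
    · intro a b ha hb; simp only [add_mul]; exact add_mem ha hb
  -- a choice of nonzero homogeneous element in each component
  have he : ∀ l : Λ, ∃ v : A, v ∈ 𝒜 l ∧ v ≠ 0 := by
    intro l
    obtain ⟨v, hv0, -⟩ := finrank_eq_one_iff'.mp (hfine l)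
    exact ⟨(v : A), v.2, fun h => hv0 (Subtype.ext h)⟩
  choose e he1 he2 using he
  -- any nonzero element of a component spans it
  have hspan : ∀ (l : Λ) (v : A), v ∈ 𝒜 l → v ≠ 0 → 𝒜 l ≤ Submodule.span F {v} := by
    intro l v hv hv0 x hx
    obtain ⟨c, hc⟩ := (finrank_eq_one_iff_of_nonzero' (⟨v, hv⟩ : 𝒜 l)
      (fun h => hv0 (congrArg Subtype.val h))).mp (hfine l) ⟨x, hx⟩
    have hcx : c • v = x := congrArg Subtype.val hc
    rw [← hcx]
    exact Submodule.smul_mem _ c (Submodule.mem_span_singleton_self v)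
  have hInt := DirectSum.Decomposition.isInternal 𝒜
  -- part 2 : multiplicativity
  have part2 : ∀ x₁ x₂ y₁ y₂ : A, x₁ ∈ (⨆ l ∈ Λ', 𝒜 l) → x₂ ∈ (⨆ l ∈ Λ', 𝒜 l) →
      y₁ ∈ (⨆ l ∈ Λ'', 𝒜 l) → y₂ ∈ (⨆ l ∈ Λ'', 𝒜 l) →
      (x₁ * y₁) * (x₂ * y₂) = (x₁ * x₂) * (y₁ * y₂) := by
    intro x₁ x₂ y₁ y₂ hx₁ hx₂ hy₁ hy₂
    rw [hassoc1 x₁ y₁ (x₂ * y₂) hx₁ hy₁, ← hassoc2 y₁ x₂ y₂ hx₂ hy₂,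
      ← hcomm x₂ y₁ hx₂ hy₁, hassoc1 x₂ y₁ y₂ hx₂ hy₁,
      ← hassoc2 x₁ x₂ (y₁ * y₂) hx₂ (hmulM Λ'' y₁ y₂ hy₁ hy₂)]
  -- part 3 : star-preserving
  have part3 : ∀ x y : A, x ∈ (⨆ l ∈ Λ', 𝒜 l) → y ∈ (⨆ l ∈ Λ'', 𝒜 l) →
      star (x * y) = star x * star y := by
    intro x y hx hy
    rw [star_mul]
    exact (hcomm (star x) (star y) (hstarM Λ' x hx) (hstarM Λ'' y hy)).symm
  refine ⟨?_, part2, part3, fun l m x y _ _ hx hy => hmul hx hy⟩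
  set μ := (TensorProduct.lift
        (((LinearMap.mul F A).domRestrict (⨆ l ∈ Λ', 𝒜 l)).compl₂
          (⨆ l ∈ Λ'', 𝒜 l).subtype)) with hμdef
  have hμtmul : ∀ (x : ↥(⨆ l ∈ Λ', 𝒜 l)) (y : ↥(⨆ l ∈ Λ'', 𝒜 l)),
      μ (x ⊗ₜ[F] y) = (x : A) * (y : A) := by
    intro x y
    simp [hμdef]
  constructor
  · -- injectivity
    -- bases for the two subalgebras
    have hli : LinearIndependent F e :=
      hInt.submodule_iSupIndep.linearIndependent 𝒜 he1 he2
    have key : ∀ (M : AddSubgroup Λ),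
        Submodule.span F (Set.range fun l : M =>
          (⟨e (l : Λ), hmem M l.2 (he1 (l : Λ))⟩ : ↥(⨆ l ∈ M, 𝒜 l))) = ⊤ := by
      intro M
      apply Submodule.map_injective_of_injective (Submodule.injective_subtype (⨆ l ∈ M, 𝒜 l))
      rw [Submodule.map_span, Submodule.map_subtype_top, ← Set.range_comp]
      have hcomp : ((⨆ l ∈ M, 𝒜 l).subtype ∘ fun l : M =>
          (⟨e (l : Λ), hmem M l.2 (he1 (l : Λ))⟩ : ↥(⨆ l ∈ M, 𝒜 l))) =
          fun l : M => e (l : Λ) := rfl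
      rw [hcomp]
      apply le_antisymm
      · rw [Submodule.span_le]
        rintro x ⟨l, rfl⟩
        exact hmem M l.2 (he1 (l : Λ))
      · refine iSup₂_le fun l hl => ?_
        refine le_trans (hspan l (e l) (he1 l) (he2 l)) (Submodule.span_mono ?_)
        exact Set.singleton_subset_iff.mpr ⟨⟨l, hl⟩, rfl⟩
    have hv'li : LinearIndependent F (fun l : Λ' =>
        (⟨e (l : Λ), hmem Λ' l.2 (he1 (l : Λ))⟩ : ↥(⨆ l ∈ Λ', 𝒜 l))) :=
      LinearIndependent.of_comp (⨆ l ∈ Λ', 𝒜 l).subtype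
        (hli.comp (Subtype.val : Λ' → Λ) Subtype.val_injective)
    have hv''li : LinearIndependent F (fun l : Λ'' =>
        (⟨e (l : Λ), hmem Λ'' l.2 (he1 (l : Λ))⟩ : ↥(⨆ l ∈ Λ'', 𝒜 l))) :=
      LinearIndependent.of_comp (⨆ l ∈ Λ'', 𝒜 l).subtype
        (hli.comp (Subtype.val : Λ'' → Λ) Subtype.val_injective)
    let b' : Module.Basis Λ' F ↥(⨆ l ∈ Λ', 𝒜 l) := Module.Basis.mk hv'li (key Λ').ge
    let b'' : Module.Basis Λ'' F ↥(⨆ l ∈ Λ'', 𝒜 l) := Module.Basis.mk hv''li (key Λ'').ge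
    let b := b'.tensorProduct b''
    -- the images of the basis vectors are linearly independent
    have hginj : Function.Injective (fun q : Λ' × Λ'' => ((q.1 : Λ) + (q.2 : Λ))) := by
      rintro ⟨a, c⟩ ⟨a', c'⟩ h
      simp only at h
      have h' : (a : Λ) + c = a' + c' := h
      have hsub : (a : Λ) - a' = (c' : Λ) - c := by
        rw [sub_eq_sub_iff_add_eq_add]
        exact h'.trans (add_comm _ _)
      have hmem1 : (a : Λ) - a' ∈ Λ' := sub_mem a.2 a'.2
      have hmem2 : (a : Λ) - a' ∈ Λ'' := hsub ▸ sub_mem c'.2 c.2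
      have h0 : (a : Λ) - a' = 0 :=
        AddSubgroup.mem_bot.mp (hcompl.disjoint.le_bot (AddSubgroup.mem_inf.mpr ⟨hmem1, hmem2⟩))
      have ha : (a : Λ) = a' := by rwa [sub_eq_zero] at h0
      have hc : (c : Λ) = c' := by
        rw [ha] at h'
        exact add_left_cancel h'
      exact Prod.ext (Subtype.ext ha) (Subtype.ext hc)
    have hli2 : LinearIndependent F (fun q : Λ' × Λ'' => e (q.1 : Λ) * e (q.2 : Λ)) :=
      (hInt.submodule_iSupIndep.comp hginj).linearIndependent
        (fun q : Λ' × Λ'' => 𝒜 ((q.1 : Λ) + (q.2 : Λ)))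
        (fun q => hmul (he1 _) (he1 _))
        (fun q => hnz (he1 _) (he1 _) (he2 _) (he2 _))
    have hμb : (⇑μ ∘ ⇑b) = fun q : Λ' × Λ'' => e (q.1 : Λ) * e (q.2 : Λ) := by
      funext q
      obtain ⟨l, m⟩ := q
      show μ (b (l, m)) = _
      rw [Module.Basis.tensorProduct_apply, hμtmul]
      simp [b', b'', Module.Basis.mk_apply]
    have h0 : ∀ x, μ x = 0 → x = 0 := by
      intro x hx
      have h1 : Finsupp.linearCombination F
          (fun q : Λ' × Λ'' => e (q.1 : Λ) * e (q.2 : Λ)) (b.repr x) = 0 := by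
        rw [← hμb, ← Finsupp.apply_linearCombination, Module.Basis.linearCombination_repr, hx]
      have h2 : b.repr x = 0 := linearIndependent_iff.mp hli2 _ h1
      have := congrArg b.repr.symm h2
      simpa using this
    intro x y hxy
    have : μ (x - y) = 0 := by rw [map_sub, hxy, sub_self]
    exact sub_eq_zero.mp (h0 _ this)
  · -- surjectivity
    rw [← LinearMap.range_eq_top, ← top_le_iff, ← hInt.submodule_iSup_eq_top, iSup_le_iff]
    intro l
    have hl : l ∈ Λ' ⊔ Λ'' := by rw [hcompl.codisjoint.eq_top]; trivial
    obtain ⟨l', hl', l'', hl'', hsum⟩ := AddSubgroup.mem_sup.mp hl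
    have hv : e l' * e l'' ∈ 𝒜 l := hsum ▸ hmul (he1 l') (he1 l'')
    have hv0 : e l' * e l'' ≠ 0 := hnz (he1 l') (he1 l'') (he2 l') (he2 l'')
    refine le_trans (hspan l _ hv hv0) ?_
    rw [Submodule.span_le, Set.singleton_subset_iff]
    exact ⟨(⟨e l', hmem Λ' hl' (he1 l')⟩ : ↥(⨆ l ∈ Λ', 𝒜 l)) ⊗ₜ[F]
      (⟨e l'', hmem Λ'' hl'' (he1 l'')⟩ : ↥(⨆ l ∈ Λ'', 𝒜 l)), hμtmul _ _⟩
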